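/- Let f be the analytic function f(z) = exp(-(1+z)/(1-z)) on the open unit disc and A(z) = -4z/(1-z)^4. Then f is a bounded non-vanishing solution of f'' + A f = 0 on the unit disc, while sup over z in D of |A(z)|(1-|z|^2)^2 is infinite. -/

import Mathlib

open Metric Set

/-- The solution `f(z) = exp(-(1+z)/(1-z))`. -/
noncomputable def solF : ℂ → ℂ := fun z => Complex.exp (-(1 + z) / (1 - z))

/-- The coefficient `A(z) = -4z/(1-z)^4`. -/
noncomputable def coeffA : ℂ → ℂ := fun z => -4 * z / (1 - z) ^ 4

lemma hasDerivAt_g {z : ℂ} (h : (1 : ℂ) - z ≠ 0) :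
    HasDerivAt (fun w : ℂ => -(1 + w) / (1 - w)) (-2 / (1 - z) ^ 2) z := by
  have h1 : HasDerivAt (fun w : ℂ => -(1 + w)) (-1) z := by
    simpa using ((hasDerivAt_id z).const_add 1).fun_neg
  have h2 : HasDerivAt (fun w : ℂ => 1 - w) (-1) z := by
    simpa using (hasDerivAt_id z).const_sub 1
  have := h1.fun_div h2 h
  refine this.congr_deriv ?_
  field_simp
  ring

lemma hasDerivAt_solF {z : ℂ} (h : (1 : ℂ) - z ≠ 0) :
    HasDerivAt solF (solF z * (-2 / (1 - z) ^ 2)) z :=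
  (hasDerivAt_g h).cexp

lemma hasDerivAt_p {z : ℂ} (h : (1 : ℂ) - z ≠ 0) :
    HasDerivAt (fun w : ℂ => -2 / (1 - w) ^ 2) (-4 / (1 - z) ^ 3) z := by
  have h2 : HasDerivAt (fun w : ℂ => (1 - w) ^ 2) (-(2 * (1 - z))) z := by
    have := ((hasDerivAt_id z).const_sub 1).fun_pow 2
    simpa using this.neg.neg
  have := (hasDerivAt_const z (-2 : ℂ)).fun_div h2 (pow_ne_zero 2 h)
  refine this.congr_deriv ?_
  field_simp
  ring

lemma hasDerivAt_F1 {z : ℂ} (h : (1 : ℂ) - z ≠ 0) :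
    HasDerivAt (fun w : ℂ => solF w * (-2 / (1 - w) ^ 2))
      (solF z * (4 * z / (1 - z) ^ 4)) z := by
  have := (hasDerivAt_solF h).fun_mul (hasDerivAt_p h)
  refine this.congr_deriv ?_
  field_simp
  ring

lemma isOpen_ne_one : IsOpen {w : ℂ | (1 : ℂ) - w ≠ 0} := by
  have : {w : ℂ | (1 : ℂ) - w ≠ 0} = (fun w : ℂ => 1 - w) ⁻¹' {0}ᶜ := rfl
  rw [this]
  exact (isOpen_compl_singleton).preimage (by continuity)

lemma deriv_solF_eq {z : ℂ} (h : (1 : ℂ) - z ≠ 0) :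
    deriv solF z = solF z * (-2 / (1 - z) ^ 2) := (hasDerivAt_solF h).deriv

lemma deriv2_solF {z : ℂ} (h : (1 : ℂ) - z ≠ 0) :
    deriv (deriv solF) z = solF z * (4 * z / (1 - z) ^ 4) := by
  have hev : deriv solF =ᶠ[nhds z] (fun w : ℂ => solF w * (-2 / (1 - w) ^ 2)) := by
    filter_upwards [isOpen_ne_one.mem_nhds h] with w hw
    exact deriv_solF_eq hw
  rw [hev.deriv_eq]
  exact (hasDerivAt_F1 h).deriv

lemma one_sub_ne {z : ℂ} (hz : z ∈ ball (0 : ℂ) 1) : (1 : ℂ) - z ≠ 0 := by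
  simp only [mem_ball, dist_zero_right] at hz
  intro h
  have : z = 1 := by linear_combination -h
  rw [this] at hz
  simp at hz

theorem stmt1 :
    DifferentiableOn ℂ solF (ball (0 : ℂ) 1) ∧
    (∀ z ∈ ball (0 : ℂ) 1, solF z ≠ 0) ∧
    (∀ z ∈ ball (0 : ℂ) 1, deriv (deriv solF) z + coeffA z * solF z = 0) ∧
    (∃ C : ℝ, ∀ z ∈ ball (0 : ℂ) 1, ‖solF z‖ ≤ C) ∧
    ¬ ∃ C : ℝ, ∀ z ∈ ball (0 : ℂ) 1, ‖coeffA z‖ * (1 - ‖z‖ ^ 2) ^ 2 ≤ C := by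
  refine ⟨?_, ?_, ?_, ?_, ?_⟩
  · intro z hz
    exact (hasDerivAt_solF (one_sub_ne hz)).differentiableAt.differentiableWithinAt
  · intro z hz
    exact Complex.exp_ne_zero _
  · intro z hz
    have h := one_sub_ne hz
    rw [deriv2_solF h]
    unfold coeffA
    field_simp
    ring
  · refine ⟨1, fun z hz => ?_⟩
    have h := one_sub_ne hz
    simp only [mem_ball, dist_zero_right] at hz
    have hre : (0:ℝ) ≤ ((1 + z) / (1 - z)).re := by
      rw [Complex.div_re]
      have hnum : (1 + z).re * (1 - z).re + (1 + z).im * (1 - z).im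
          = 1 - Complex.normSq z := by
        simp [Complex.normSq_apply]
        ring
      have hz2 : Complex.normSq z < 1 := by
        rw [Complex.normSq_eq_norm_sq]
        nlinarith [norm_nonneg z]
      have hpos : 0 < Complex.normSq (1 - z) := by
        rwa [Complex.normSq_pos]
      have h1 : 0 ≤ (1 + z).re * (1 - z).re / Complex.normSq (1 - z)
          + (1 + z).im * (1 - z).im / Complex.normSq (1 - z) := by
        rw [← add_div, hnum]
        exact div_nonneg (by linarith) hpos.le
      linarith [h1]
    have : ‖solF z‖ = Real.exp ((-(1 + z) / (1 - z)).re) := by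
      unfold solF
      rw [Complex.norm_exp]
    rw [this]
    have : (-(1 + z) / (1 - z)).re = -(((1 + z) / (1 - z)).re) := by
      rw [neg_div, Complex.neg_re]
    rw [this]
    calc Real.exp (-(((1 + z) / (1 - z)).re)) ≤ Real.exp 0 :=
          Real.exp_le_exp.mpr (by linarith)
      _ = 1 := Real.exp_zero
  · rintro ⟨C, hC⟩
    set ε : ℝ := min (1/2) (1/(|C|+2)) with hε
    have hε0 : 0 < ε := by
      apply lt_min <;> positivity
    have hε1 : ε ≤ 1/2 := min_le_left _ _
    have hεC : ε ≤ 1/(|C|+2) := min_le_right _ _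
    set t : ℝ := 1 - ε with ht
    have ht0 : 0 < t := by simp [ht]; linarith
    have ht1 : t < 1 := by simp [ht]; linarith
    have hth : (1:ℝ)/2 ≤ t := by simp [ht]; linarith
    have hmem : (t : ℂ) ∈ ball (0 : ℂ) 1 := by
      simp only [mem_ball, dist_zero_right, Complex.norm_real, Real.norm_eq_abs]
      rw [abs_of_pos ht0]; exact ht1
    have hkey := hC (t : ℂ) hmem
    have hnormz : ‖(t : ℂ)‖ = t := by
      rw [Complex.norm_real, Real.norm_eq_abs, abs_of_pos ht0]
    have hnormA : ‖coeffA (t : ℂ)‖ = 4 * t / (1 - t)^4 := by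
      unfold coeffA
      have : (1 : ℂ) - (t:ℂ) = ((1 - t : ℝ) : ℂ) := by push_cast; ring
      rw [this]
      rw [norm_div, norm_pow, Complex.norm_real, Real.norm_eq_abs]
      have h4 : ‖(-4 : ℂ) * (t:ℂ)‖ = 4 * t := by
        rw [norm_mul, Complex.norm_real, Real.norm_eq_abs]
        simp [abs_of_pos ht0]
      rw [h4, abs_of_pos (by linarith)]
    rw [hnormA, hnormz] at hkey
    have h1t : 0 < 1 - t := by linarith
    have hval : 4 * t / (1 - t)^4 * (1 - t^2)^2 = 4 * t * (1 + t)^2 / (1 - t)^2 := by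
      field_simp
      ring
    rw [hval] at hkey
    have hlow : 2 / (1 - t)^2 ≤ 4 * t * (1 + t)^2 / (1 - t)^2 := by
      apply div_le_div_of_nonneg_right ?_ (by positivity)
      nlinarith
    have h1tε : 1 - t = ε := by simp [ht]
    rw [h1tε] at hlow hkey
    have hε1' : ε ≤ 1 := by linarith
    have hA : (|C|+2) * ε ≤ 1 := by
      have := mul_le_mul_of_nonneg_left hεC (by positivity : (0:ℝ) ≤ |C|+2)
      rwa [mul_one_div, div_self (by positivity : (|C|:ℝ)+2 ≠ 0)] at this
    have hbig : 2 * (|C| + 2) ≤ 2 / ε^2 := by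
      rw [le_div_iff₀ (by positivity)]
      nlinarith [sq_nonneg ε]
    have : C < 2 / ε^2 := by
      have h1 : C ≤ |C| := le_abs_self C
      have h2 : (0:ℝ) ≤ |C| := abs_nonneg C
      linarith
    linarith
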